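/- Let A be a unital complex C*-algebra and let γ, D, H ∈ A be selfadjoint with γ² = 1, γ·D = −D·γ, γ·H = H·γ, H² = 1 and D·H = H·D. Let φ : ℝ → [0,1] be a localizing function, set Φ := φ(D), Φ₂ := φ₂(D) (where φ₂(x) := φ(x/2)), G := g(D) with g(x) := (1 − φ(x)⁴)^{1/2}·sgn(x) (a continuous function, since φ = 1 near 0), all via the continuous functional calculus, and set A₀ := Φ·H·Φ and C := (1 − Φ₂⁴)^{1/2}. Then for every t ∈ [0,1], with K_t := (1−t)^{1/2}·Φ₂·D·Φ₂ + t^{1/2}·G, one has (γ·(A₀ − C) + K_t)² ≥ t·1 in the order of selfadjoint elements; in particular γ·(A₀ − C) + K_t is invertible for every t ∈ (0,1]. -/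

import Mathlib

open MeasureTheory

/-- The Fourier transform `φ̂(p) = (2π)^{-1/2} ∫ φ(x) e^{-ixp} dx` of a real function `φ`. -/
noncomputable def fourierHat (φ : ℝ → ℝ) (p : ℝ) : ℂ :=
  (Real.sqrt (2 * Real.pi) : ℂ)⁻¹ * ∫ x : ℝ, (φ x : ℂ) * Complex.exp (-(Complex.I * x * p))

/-- A localizing function: an even bounded continuous L¹-function `φ : ℝ → [0,1]` supported in
`[−1,1]`, equal to `1` on `[−1/2,1/2]`, nonincreasing on `[0,∞)`, with `p·φ̂(p)` integrable. -/
structure IsLocalizing (φ : ℝ → ℝ) : Prop where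
  continuous : Continuous φ
  even : ∀ x : ℝ, φ (-x) = φ x
  nonneg : ∀ x : ℝ, 0 ≤ φ x
  le_one : ∀ x : ℝ, φ x ≤ 1
  integrable : Integrable φ
  support : ∀ x : ℝ, 1 < |x| → φ x = 0
  eq_one : ∀ x : ℝ, |x| ≤ 1 / 2 → φ x = 1
  antitone : ∀ x₀ x₁ : ℝ, 0 ≤ x₀ → x₀ ≤ x₁ → φ x₁ ≤ φ x₀
  fourier_integrable : Integrable (fun p : ℝ => (p : ℂ) * fourierHat φ p)

lemma cfc_conj_neg {A : Type*} [CStarAlgebra A] {γ a : A} (hγ : IsSelfAdjoint γ)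
    (hγ2 : γ * γ = 1) (hconj : γ * a * γ = -a) (ha : IsSelfAdjoint a) (f : ℝ → ℝ) :
    γ * cfc f a * γ = cfc (fun x => f (-x)) a := by
  have hsymm : ∀ x : ℝ, x ∈ spectrum ℝ a → -x ∈ spectrum ℝ a := by
    have h1 : spectrum ℝ (-a) = spectrum ℝ a := by
      have : (⟨γ, γ, hγ2, hγ2⟩ : Aˣ) * a * (⟨γ, γ, hγ2, hγ2⟩ : Aˣ)⁻¹ = -a := hconj
      rw [← this]
      exact spectrum.units_conjugate
    intro x hx
    have h2 : -x ∈ -spectrum ℝ a := Set.neg_mem_neg.mpr hx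
    rwa [spectrum.neg_eq, h1] at h2
  by_cases hf : ContinuousOn f (spectrum ℝ a)
  · have hf' : ContinuousOn (fun x => f (-x)) (spectrum ℝ a) := by
      intro x hx
      exact (hf.comp continuousOn_neg fun y hy => hsymm y hy) x hx
    let n : C(spectrum ℝ a, spectrum ℝ a) :=
      ⟨fun x => ⟨-(x : ℝ), hsymm x x.2⟩, by fun_prop⟩
    let ψ : C(spectrum ℝ a, ℝ) →⋆ₐ[ℝ] A :=
      { toFun := fun g => γ * cfcHom ha g * γ
        map_one' := by simp [hγ2]
        map_mul' := fun g₁ g₂ => by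
          simp only [map_mul]
          rw [show γ * cfcHom ha g₁ * γ * (γ * cfcHom ha g₂ * γ)
              = γ * cfcHom ha g₁ * (γ * γ) * (cfcHom ha g₂ * γ) from by noncomm_ring,
            hγ2, mul_one]
          noncomm_ring
        map_zero' := by simp
        map_add' := fun g₁ g₂ => by simp [map_add, mul_add, add_mul]
        commutes' := fun r => by
          show γ * cfcHom ha (algebraMap ℝ _ r) * γ = algebraMap ℝ A r
          rw [AlgHomClass.commutes, ← Algebra.commutes r γ, mul_assoc, hγ2, mul_one]
        map_star' := fun g => by
          show γ * cfcHom ha (star g) * γ = star (γ * cfcHom ha g * γ)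
          simp only [map_star, star_mul, hγ.star_eq, star_star, mul_assoc] }
    let χ : C(spectrum ℝ a, ℝ) →⋆ₐ[ℝ] A :=
      (cfcHom ha).comp (ContinuousMap.compStarAlgHom' ℝ ℝ n)
    have hψc : Continuous ψ := by
      show Continuous fun g => γ * cfcHom ha g * γ
      exact (continuous_const.mul (cfcHom_continuous ha)).mul continuous_const
    have hχc : Continuous χ :=
      (cfcHom_continuous ha).comp (ContinuousMap.continuous_precomp n)
    have hagree : ψ = χ := by
      refine StarAlgHom.ext_continuousMap a ψ χ hψc hχc ?_
      have h1 : ψ ((ContinuousMap.id ℝ).restrict (spectrum ℝ a)) = -a := by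
        show γ * cfcHom ha _ * γ = -a
        rw [cfcHom_id ha, hconj]
      have h2 : χ ((ContinuousMap.id ℝ).restrict (spectrum ℝ a)) = -a := by
        rw [StarAlgHom.comp_apply, ContinuousMap.compStarAlgHom'_apply]
        have : ((ContinuousMap.id ℝ).restrict (spectrum ℝ a)).comp n
            = -((ContinuousMap.id ℝ).restrict (spectrum ℝ a)) := by ext x; rfl
        rw [this, map_neg, cfcHom_id ha]
      rw [h1, h2]
    have happ := DFunLike.congr_fun hagree (⟨_, hf.restrict⟩ : C(spectrum ℝ a, ℝ))
    rw [cfc_apply f a ha hf, cfc_apply _ a ha hf']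
    calc γ * cfcHom ha ⟨_, hf.restrict⟩ * γ = ψ ⟨_, hf.restrict⟩ := rfl
      _ = χ ⟨_, hf.restrict⟩ := happ
      _ = cfcHom ha ⟨_, hf'.restrict⟩ := by
          rw [StarAlgHom.comp_apply, ContinuousMap.compStarAlgHom'_apply]
          congr 1
  · have hf' : ¬ ContinuousOn (fun x => f (-x)) (spectrum ℝ a) := by
      intro h
      apply hf
      have h2 : ContinuousOn (fun x : ℝ => f (- -x)) (spectrum ℝ a) :=
        h.comp continuousOn_neg fun y hy => hsymm y hy
      simpa only [neg_neg] using h2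
    rw [cfc_apply_of_not_continuousOn a hf, cfc_apply_of_not_continuousOn a hf',
      mul_zero, zero_mul]


/-- **the key inequality in the zero-commutator case.** Assume `γ, D, H` are
selfadjoint with `γ² = 1`, `γD = −Dγ`, `γH = Hγ`, `H² = 1` and `DH = HD`. With `Φ = φ(D)`,
`Φ₂ = φ₂(D)`, `G = g(D)` for `g(x) = (1 − φ(x)⁴)^{1/2}·sgn(x)`, `A₀ = ΦHΦ`,
`C = (1 − Φ₂⁴)^{1/2}` and `K_t = (1−t)^{1/2}Φ₂DΦ₂ + t^{1/2}G`, one has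
`(γ(A₀ − C) + K_t)² ≥ t·1` for all `t ∈ [0,1]`; in particular `γ(A₀ − C) + K_t` is invertible
for `t ∈ (0,1]`. -/
theorem localizer_homotopy_sq_ge
    {A : Type*} [CStarAlgebra A] [PartialOrder A] [StarOrderedRing A]
    (γ D H : A) (hγ : IsSelfAdjoint γ) (hD : IsSelfAdjoint D) (hH : IsSelfAdjoint H)
    (hγ2 : γ ^ 2 = 1) (hγD : γ * D = -(D * γ)) (hγH : γ * H = H * γ)
    (hH2 : H ^ 2 = 1) (hDH : D * H = H * D)
    (φ : ℝ → ℝ) (hφ : IsLocalizing φ)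
    (Φ Φ₂ G A₀ C : A)
    (hΦ : Φ = cfc φ D)
    (hΦ₂ : Φ₂ = cfc (fun x : ℝ => φ (x / 2)) D)
    (hG : G = cfc (fun x : ℝ => Real.sqrt (1 - φ x ^ 4) * Real.sign x) D)
    (hA₀ : A₀ = Φ * H * Φ)
    (hC : C = CFC.sqrt (1 - Φ₂ ^ 4)) :
    (∀ t ∈ Set.Icc (0:ℝ) 1,
      t • (1 : A)
        ≤ (γ * (A₀ - C) + (Real.sqrt (1 - t) • (Φ₂ * D * Φ₂) + Real.sqrt t • G)) ^ 2) ∧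
    (∀ t ∈ Set.Ioc (0:ℝ) 1,
      IsUnit (γ * (A₀ - C) + (Real.sqrt (1 - t) • (Φ₂ * D * Φ₂) + Real.sqrt t • G))) := by
  have hφc := hφ.continuous
  have hev := hφ.even
  have hnn := hφ.nonneg
  have hle1 := hφ.le_one
  have hsupp := hφ.support
  have hone := hφ.eq_one
  -- basic scalars
  have hγγ : γ * γ = 1 := by rw [← sq]; exact hγ2
  have hHH : H * H = 1 := by rw [← sq]; exact hH2
  -- functions
  set φ₂f : ℝ → ℝ := fun x => φ (x / 2) with hφ₂f
  set gf : ℝ → ℝ := fun x => Real.sqrt (1 - φ x ^ 4) * Real.sign x with hgf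
  set cf : ℝ → ℝ := fun x => Real.sqrt (1 - φ₂f x ^ 4) with hcf
  set pf : ℝ → ℝ := fun x => φ₂f x * x * φ₂f x with hpf
  -- continuity
  have hφ₂c : Continuous φ₂f := hφc.comp (continuous_id.div_const 2)
  have hcfc' : Continuous cf := (continuous_const.sub (hφ₂c.pow 4)).sqrt
  have hpfc : Continuous pf := (hφ₂c.mul continuous_id).mul hφ₂c
  have hgc : Continuous gf := by
    rw [continuous_iff_continuousAt]
    intro x
    rcases eq_or_ne x 0 with rfl | hx
    · have hev0 : ∀ᶠ y in nhds (0:ℝ), gf y = 0 := by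
        filter_upwards [Metric.ball_mem_nhds (0:ℝ) (by norm_num : (0:ℝ) < 1/2)] with y hy
        have hy' : |y| ≤ 1/2 := by
          rw [Metric.mem_ball, Real.dist_eq, sub_zero] at hy
          exact hy.le
        have : φ y = 1 := hone y hy'
        simp [hgf, this]
      have heq : gf =ᶠ[nhds (0:ℝ)] fun _ => 0 := hev0
      exact heq.continuousAt
    · rcases hx.lt_or_gt with hneg | hpos
      · have hev' : (fun y : ℝ => Real.sqrt (1 - φ y ^ 4) * (-1)) =ᶠ[nhds x] gf := by
          filter_upwards [Iio_mem_nhds hneg] with y hy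
          simp [hgf, Real.sign_of_neg hy]
        exact ContinuousAt.congr
          (((continuous_const.sub (hφc.pow 4)).sqrt.mul continuous_const).continuousAt) hev'
      · have hev' : (fun y : ℝ => Real.sqrt (1 - φ y ^ 4) * 1) =ᶠ[nhds x] gf := by
          filter_upwards [Ioi_mem_nhds hpos] with y hy
          simp [hgf, Real.sign_of_pos hy]
        exact ContinuousAt.congr
          (((continuous_const.sub (hφc.pow 4)).sqrt.mul continuous_const).continuousAt) hev'
  -- pointwise basics
  have h1mφ4 : ∀ x : ℝ, 0 ≤ 1 - φ x ^ 4 := by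
    intro x
    have := pow_le_one₀ (hnn x) (hle1 x) (n := 4)
    linarith
  have h1mφ₂4 : ∀ x : ℝ, 0 ≤ 1 - φ₂f x ^ 4 := fun x => h1mφ4 (x / 2)
  have hgsq : ∀ x : ℝ, gf x ^ 2 = 1 - φ x ^ 4 := by
    intro x
    rcases eq_or_ne x 0 with rfl | hx
    · have h0 : φ 0 = 1 := hone 0 (by norm_num)
      simp [hgf, h0, Real.sign_zero]
    · have hs : Real.sign x ^ 2 = 1 := by
        rcases Real.sign_apply_eq_of_ne_zero x hx with h | h <;> rw [h] <;> norm_num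
      rw [hgf]
      rw [mul_pow, hs, mul_one, Real.sq_sqrt (h1mφ4 x)]
  have hcsq : ∀ x : ℝ, cf x ^ 2 = 1 - φ₂f x ^ 4 := fun x => Real.sq_sqrt (h1mφ₂4 x)
  have hφcf : ∀ x : ℝ, φ x * cf x = 0 := by
    intro x
    rcases le_or_gt |x| 1 with h | h
    · have h2 : |x / 2| ≤ 1 / 2 := by
        rw [abs_div, abs_two]; linarith
      have : φ₂f x = 1 := hone (x / 2) h2
      simp [hcf, this]
    · have : φ x = 0 := hsupp x h
      simp [this]
  -- cfc identities
  have h1sub : (1 : A) - Φ₂ ^ 4 = cfc (fun x => 1 - φ₂f x ^ 4) D := by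
    rw [cfc_sub (fun _ => (1:ℝ)) (fun x => φ₂f x ^ 4) D continuousOn_const
      (hφ₂c.pow 4).continuousOn, cfc_const 1 D hD, map_one,
      cfc_pow φ₂f 4 D hφ₂c.continuousOn hD, ← hΦ₂]
  have hC' : C = cfc cf D := by
    rw [hC]
    refine CFC.sqrt_unique ?_ (cfc_nonneg fun x _ => Real.sqrt_nonneg _)
    rw [← cfc_mul cf cf D hcfc'.continuousOn hcfc'.continuousOn]
    rw [show (fun x => cf x * cf x) = fun x => 1 - φ₂f x ^ 4 from
      funext fun x => by rw [← sq, hcsq x], ← h1sub]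
  -- commutation of H with cfc's of D
  have hHD : Commute H D := hDH.symm
  have hHcfc : ∀ f : ℝ → ℝ, Commute H (cfc f D) := fun f => (Commute.cfc_real hHD.symm f).symm
  have hHΦ : H * Φ = Φ * H := by rw [hΦ]; exact hHcfc φ
  have hA₀' : A₀ = H * (Φ * Φ) := by
    rw [hA₀, ← mul_assoc, ← hHΦ, mul_assoc]
  -- γ conjugation facts
  have hγDγ : γ * D * γ = -D := by
    rw [hγD, neg_mul, mul_assoc, hγγ, mul_one]
  have hγeven : ∀ f : ℝ → ℝ, (∀ x, f (-x) = f x) → γ * cfc f D = cfc f D * γ := by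
    intro f hf
    have h1 := cfc_conj_neg hγ hγγ hγDγ hD f
    rw [show (fun x => f (-x)) = f from funext hf] at h1
    calc γ * cfc f D = γ * cfc f D * (γ * γ) := by rw [hγγ, mul_one]
      _ = (γ * cfc f D * γ) * γ := by noncomm_ring
      _ = cfc f D * γ := by rw [h1]
  have hγodd : ∀ f : ℝ → ℝ, (∀ x, f (-x) = -f x) → cfc f D * γ = -(γ * cfc f D) := by
    intro f hf
    have h1 := cfc_conj_neg hγ hγγ hγDγ hD f
    rw [show (fun x => f (-x)) = fun x => -f x from funext hf, cfc_neg] at h1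
    calc cfc f D * γ = (γ * γ) * cfc f D * γ := by rw [hγγ, one_mul]
      _ = γ * (γ * cfc f D * γ) := by noncomm_ring
      _ = γ * -(cfc f D) := by rw [h1]
      _ = -(γ * cfc f D) := by noncomm_ring
  have hφeven : ∀ x : ℝ, φ (-x) = φ x := hev
  have hγΦ : γ * Φ = Φ * γ := by rw [hΦ]; exact hγeven φ hφeven
  have hγC : γ * C = C * γ := by
    rw [hC']
    exact hγeven cf fun x => by
      simp only [hcf, hφ₂f, neg_div]
      rw [hev (x / 2)]
  have hγA₀ : γ * A₀ = A₀ * γ := by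
    rw [hA₀']
    calc γ * (H * (Φ * Φ)) = (γ * H) * (Φ * Φ) := by noncomm_ring
      _ = (H * γ) * (Φ * Φ) := by rw [hγH]
      _ = H * ((γ * Φ) * Φ) := by noncomm_ring
      _ = H * ((Φ * γ) * Φ) := by rw [hγΦ]
      _ = H * (Φ * (γ * Φ)) := by noncomm_ring
      _ = H * (Φ * (Φ * γ)) := by rw [hγΦ]
      _ = H * (Φ * Φ) * γ := by noncomm_ring
  -- the two parts, via a common computation
  have key : ∀ t : ℝ, 0 ≤ t → t ≤ 1 →
      (γ * (A₀ - C) + (Real.sqrt (1 - t) • (Φ₂ * D * Φ₂) + Real.sqrt t • G)) ^ 2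
        = cfc (fun x => φ x ^ 4 + cf x ^ 2
            + (Real.sqrt (1 - t) * pf x + Real.sqrt t * gf x) ^ 2) D := by
    intro t ht0 ht1
    set ktf : ℝ → ℝ := fun x => Real.sqrt (1 - t) * pf x + Real.sqrt t * gf x with hktf
    have hktc : Continuous ktf := (continuous_const.mul hpfc).add (continuous_const.mul hgc)
    set K : A := Real.sqrt (1 - t) • (Φ₂ * D * Φ₂) + Real.sqrt t • G with hKdef
    have hΦ₂DΦ₂ : Φ₂ * D * Φ₂ = cfc pf D := by
      rw [hΦ₂, hpf]
      rw [cfc_mul (fun x => φ₂f x * x) φ₂f D (hφ₂c.mul continuous_id).continuousOn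
        hφ₂c.continuousOn,
        cfc_mul φ₂f (fun x => x) D hφ₂c.continuousOn continuousOn_id, cfc_id' ℝ D hD]
    have hK : K = cfc ktf D := by
      rw [hKdef, hktf, cfc_add D (fun x => Real.sqrt (1 - t) * pf x) (fun x => Real.sqrt t * gf x) (continuous_const.mul hpfc).continuousOn
        (continuous_const.mul hgc).continuousOn,
        cfc_const_mul _ pf D hpfc.continuousOn, cfc_const_mul _ gf D hgc.continuousOn,
        ← hΦ₂DΦ₂, ← hG]
    -- odd function facts
    have hktodd : ∀ x : ℝ, ktf (-x) = -ktf x := by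
      intro x
      have hp : pf (-x) = -pf x := by
        simp only [hpf, hφ₂f, neg_div]
        rw [hev (x / 2)]
        ring
      have hg : gf (-x) = -gf x := by
        simp only [hgf]
        rw [hev x, Real.sign_neg]
        ring
      simp only [hktf]
      rw [hp, hg]
      ring
    have hKγ : K * γ = -(γ * K) := by
      rw [hK]; exact hγodd ktf hktodd
    -- commutation of S with K
    have hCK : C * K = K * C := by
      rw [hC', hK]; exact cfc_commute_cfc cf ktf D
    have hΦK : Φ * K = K * Φ := by
      rw [hΦ, hK]; exact cfc_commute_cfc φ ktf D
    have hHK : H * K = K * H := by rw [hK]; exact hHcfc ktf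
    have hA₀K : A₀ * K = K * A₀ := by
      rw [hA₀']
      calc H * (Φ * Φ) * K = H * (Φ * (Φ * K)) := by noncomm_ring
        _ = H * (Φ * (K * Φ)) := by rw [hΦK]
        _ = H * ((Φ * K) * Φ) := by noncomm_ring
        _ = H * ((K * Φ) * Φ) := by rw [hΦK]
        _ = (H * K) * (Φ * Φ) := by noncomm_ring
        _ = (K * H) * (Φ * Φ) := by rw [hHK]
        _ = K * (H * (Φ * Φ)) := by noncomm_ring
    set S : A := A₀ - C with hSdef
    have hγS : γ * S = S * γ := by
      rw [hSdef, mul_sub, sub_mul, hγA₀, hγC]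
    have hSK : K * S = S * K := by
      rw [hSdef, mul_sub, sub_mul, hA₀K, hCK]
    -- A₀ * C = 0 and C * A₀ = 0
    have hΦCzero : Φ * C = 0 := by
      rw [hΦ, hC', ← cfc_mul φ cf D hφc.continuousOn hcfc'.continuousOn,
        show (fun x => φ x * cf x) = fun _ => (0:ℝ) from funext hφcf,
        cfc_const 0 D hD, map_zero]
    have hCΦzero : C * Φ = 0 := by
      have : Φ * C = C * Φ := by rw [hΦ, hC']; exact cfc_commute_cfc φ cf D
      rw [← this, hΦCzero]
    have hA₀C : A₀ * C = 0 := by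
      rw [hA₀, mul_assoc, mul_assoc, hΦCzero, mul_zero, mul_zero]
    have hCA₀ : C * A₀ = 0 := by
      rw [hA₀, ← mul_assoc, ← mul_assoc, hCΦzero, zero_mul, zero_mul]
    -- squares
    have hA₀sq : A₀ * A₀ = (Φ * Φ) * (Φ * Φ) := by
      rw [hA₀']
      calc H * (Φ * Φ) * (H * (Φ * Φ)) = H * ((Φ * Φ) * H) * (Φ * Φ) := by noncomm_ring
        _ = H * (H * (Φ * Φ)) * (Φ * Φ) := by
            rw [show (Φ * Φ) * H = H * (Φ * Φ) from by
              calc (Φ * Φ) * H = Φ * (Φ * H) := by noncomm_ring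
                _ = Φ * (H * Φ) := by rw [hHΦ]
                _ = (Φ * H) * Φ := by noncomm_ring
                _ = (H * Φ) * Φ := by rw [hHΦ]
                _ = H * (Φ * Φ) := by noncomm_ring]
        _ = (H * H) * ((Φ * Φ) * (Φ * Φ)) := by noncomm_ring
        _ = (Φ * Φ) * (Φ * Φ) := by rw [hHH, one_mul]
    have hSsq : S * S = A₀ * A₀ + C * C := by
      rw [hSdef]
      calc (A₀ - C) * (A₀ - C) = A₀ * A₀ - A₀ * C - C * A₀ + C * C := by noncomm_ring
        _ = A₀ * A₀ + C * C := by rw [hA₀C, hCA₀]; noncomm_ring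
    -- expand the square
    have hBsq : (γ * S + K) ^ 2 = S * S + K * K := by
      have e1 : (γ * S + K) ^ 2
          = γ * S * (γ * S) + γ * S * K + K * (γ * S) + K * K := by noncomm_ring
      have e2 : γ * S * (γ * S) = S * S := by
        calc γ * S * (γ * S) = γ * (S * γ) * S := by noncomm_ring
          _ = γ * (γ * S) * S := by rw [hγS]
          _ = (γ * γ) * (S * S) := by noncomm_ring
          _ = S * S := by rw [hγγ, one_mul]
      have e3 : K * (γ * S) = -(γ * S * K) := by
        calc K * (γ * S) = (K * γ) * S := by noncomm_ring
          _ = -(γ * K) * S := by rw [hKγ]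
          _ = -(γ * (K * S)) := by noncomm_ring
          _ = -(γ * (S * K)) := by rw [hSK]
          _ = -(γ * S * K) := by noncomm_ring
      rw [e1, e2, e3]
      noncomm_ring
    -- convert to cfc
    have hΦ4 : A₀ * A₀ = cfc (fun x => φ x ^ 4) D := by
      rw [hA₀sq, hΦ, ← cfc_mul φ φ D hφc.continuousOn hφc.continuousOn,
        ← cfc_mul (fun x => φ x * φ x) (fun x => φ x * φ x) D (hφc.mul hφc).continuousOn (hφc.mul hφc).continuousOn]
      exact cfc_congr fun x _ => by ring
    have hC2 : C * C = cfc (fun x => cf x ^ 2) D := by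
      rw [hC', ← cfc_mul cf cf D hcfc'.continuousOn hcfc'.continuousOn]
      exact cfc_congr fun x _ => (sq (cf x)).symm
    have hK2 : K * K = cfc (fun x => ktf x ^ 2) D := by
      rw [hK, ← cfc_mul ktf ktf D hktc.continuousOn hktc.continuousOn]
      exact cfc_congr fun x _ => (sq (ktf x)).symm
    rw [hBsq, hSsq, hΦ4, hC2, hK2,
      ← cfc_add D (fun x => φ x ^ 4) (fun x => cf x ^ 2) (hφc.pow 4).continuousOn (hcfc'.pow 2).continuousOn,
      ← cfc_add D (fun x => φ x ^ 4 + cf x ^ 2) (fun x => ktf x ^ 2) ((hφc.pow 4).add (hcfc'.pow 2)).continuousOn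
        (hktc.pow 2).continuousOn]
  -- pointwise lower bound
  have hpt : ∀ t : ℝ, 0 ≤ t → t ≤ 1 → ∀ x : ℝ,
      t ≤ φ x ^ 4 + cf x ^ 2 + (Real.sqrt (1 - t) * pf x + Real.sqrt t * gf x) ^ 2 := by
    intro t ht0 ht1 x
    have hs1 : Real.sqrt (1 - t) ^ 2 = 1 - t := Real.sq_sqrt (by linarith)
    have hs2 : Real.sqrt t ^ 2 = t := Real.sq_sqrt ht0
    have hpg : 0 ≤ pf x * gf x := by
      have h1 : pf x * gf x = (Real.sign x * x) * (φ₂f x ^ 2 * Real.sqrt (1 - φ x ^ 4)) := by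
        rw [hpf, hgf]; ring
      rw [h1]
      exact mul_nonneg (Real.sign_mul_nonneg x)
        (mul_nonneg (sq_nonneg _) (Real.sqrt_nonneg _))
    have hexp : (Real.sqrt (1 - t) * pf x + Real.sqrt t * gf x) ^ 2
        = Real.sqrt (1 - t) ^ 2 * pf x ^ 2
          + 2 * (Real.sqrt (1 - t) * Real.sqrt t) * (pf x * gf x)
          + Real.sqrt t ^ 2 * gf x ^ 2 := by ring
    rw [hexp, hs1, hs2, hgsq x, hcsq x]
    have h1 : 0 ≤ (1 - t) * pf x ^ 2 := mul_nonneg (by linarith) (sq_nonneg _)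
    have h2 : 0 ≤ 2 * (Real.sqrt (1 - t) * Real.sqrt t) * (pf x * gf x) :=
      mul_nonneg (mul_nonneg (by norm_num)
        (mul_nonneg (Real.sqrt_nonneg _) (Real.sqrt_nonneg _))) hpg
    have h3 : 0 ≤ (1 - t) * φ x ^ 4 := mul_nonneg (by linarith) (by positivity)
    have h4 : φ₂f x ^ 4 ≤ 1 := by linarith [h1mφ₂4 x]
    nlinarith [h1mφ4 x]
  constructor
  · rintro t ⟨ht0, ht1⟩
    rw [key t ht0 ht1]
    have hconst : t • (1 : A) = cfc (fun _ : ℝ => t) D := by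
      rw [cfc_const t D hD, Algebra.algebraMap_eq_smul_one]
    rw [hconst]
    refine cfc_mono (fun x _ => hpt t ht0 ht1 x) continuousOn_const ?_
    have hktc : Continuous fun x => Real.sqrt (1 - t) * pf x + Real.sqrt t * gf x :=
      (continuous_const.mul hpfc).add (continuous_const.mul hgc)
    exact (((hφc.pow 4).add (hcfc'.pow 2)).add (hktc.pow 2)).continuousOn
  · rintro t ⟨ht0, ht1⟩
    set B : A := γ * (A₀ - C) + (Real.sqrt (1 - t) • (Φ₂ * D * Φ₂) + Real.sqrt t • G) with hB
    have hBsq : IsUnit (B * B) := by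
      have h1 : B * B = B ^ 2 := (sq B).symm
      rw [h1, key t ht0.le ht1]
      have hktc : Continuous fun x => Real.sqrt (1 - t) * pf x + Real.sqrt t * gf x :=
        (continuous_const.mul hpfc).add (continuous_const.mul hgc)
      refine isUnit_cfc_iff _ D
        ((((hφc.pow 4).add (hcfc'.pow 2)).add (hktc.pow 2)).continuousOn) hD |>.mpr ?_
      intro x _
      have h := hpt t ht0.le ht1 x
      exact (lt_of_lt_of_le ht0 h).ne'
    obtain ⟨u, hu⟩ := hBsq
    have hcomm : Commute B (u : A) := by
      show B * ↑u = ↑u * B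
      rw [hu]
      noncomm_ring
    have hcomm' : Commute B (↑u⁻¹ : A) := hcomm.units_inv_right
    refine isUnit_iff_exists.mpr ⟨B * ↑u⁻¹, ?_, ?_⟩
    · rw [← mul_assoc, ← hu, Units.mul_inv]
    · calc (B * ↑u⁻¹) * B = (↑u⁻¹ * B) * B := by rw [hcomm'.eq]
        _ = ↑u⁻¹ * (B * B) := by rw [mul_assoc]
        _ = ↑u⁻¹ * ↑u := by rw [hu]
        _ = 1 := u.inv_mul
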